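/- Let φ = Σ_{g ≥ 0} ε^{g−1} φ_g as above. Then for every i ≥ 0, ∂_x^i(e^φ)/e^φ = ε^{−i}(∂_x φ_0)^i + ε^{−i+1}·( i·(∂_x φ_0)^{i−1}(∂_x φ_1) + (i(i−1)/2)·(∂_x φ_0)^{i−2}(∂_x² φ_0) ) + O(ε^{−i+2}). -/

import Mathlib

open Finset

variable {R : Type*} [CommRing R] [Algebra ℚ R]

/-- The formal Laurent series `φ = Σ_{g ≥ 0} ε^{g−1} φ_g` in the variable `ε`. -/
noncomputable def epsLaurent (f : ℕ → R) : HahnSeries ℤ R :=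
  HahnSeries.single (-1 : ℤ) (1 : R) *
    HahnSeries.ofPowerSeries ℤ R (PowerSeries.mk f)

/-- The coefficientwise (ε-linear) extension of a derivation `D` on `R` to formal Laurent
series in `ε` with coefficients in `R`. -/
def coeffwise (D : Derivation ℚ R R) (f : HahnSeries ℤ R) : HahnSeries ℤ R where
  coeff := fun n => D (f.coeff n)
  isPWO_support' := f.isPWO_support'.mono (by
    intro n hn
    simp only [Function.mem_support] at hn ⊢
    intro h
    exact hn (by rw [h, map_zero]))

section AuxMul

variable {S : Type*} [CommRing S]

lemma coeff_mul_eq_zero_of_lt {x y : HahnSeries ℤ S} {p q m : ℤ}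
    (hx : ∀ j < p, x.coeff j = 0) (hy : ∀ k < q, y.coeff k = 0) (hm : m < p + q) :
    (x * y).coeff m = 0 := by
  rw [HahnSeries.coeff_mul]
  refine Finset.sum_eq_zero fun ij hij => ?_
  rw [Finset.mem_addAntidiagonal] at hij
  by_cases h1 : ij.1 < p
  · rw [hx _ h1, zero_mul]
  · have h2 : ij.2 < q := by omega
    rw [hy _ h2, mul_zero]

lemma coeff_mul_bottom {x y : HahnSeries ℤ S} {p q : ℤ}
    (hx : ∀ j < p, x.coeff j = 0) (hy : ∀ k < q, y.coeff k = 0) :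
    (x * y).coeff (p + q) = x.coeff p * y.coeff q := by
  rw [HahnSeries.coeff_mul, Finset.sum_eq_single (p, q)]
  · intro b hb hne
    rw [Finset.mem_addAntidiagonal] at hb
    obtain ⟨hb1, hb2, hb3⟩ := hb
    have hb' : ¬(b.1 = p ∧ b.2 = q) := fun h => hne (Prod.ext h.1 h.2)
    by_cases h1 : b.1 < p
    · rw [hx _ h1, zero_mul]
    · have h2 : b.2 < q := by omega
      rw [hy _ h2, mul_zero]
  · intro hnot
    by_cases hxp : x.coeff p = 0
    · rw [hxp, zero_mul]
    · by_cases hyq : y.coeff q = 0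
      · rw [hyq, mul_zero]
      · exact absurd (Finset.mem_addAntidiagonal.mpr
          ⟨(HahnSeries.mem_support x p).mpr hxp, (HahnSeries.mem_support y q).mpr hyq, rfl⟩) hnot

lemma coeff_mul_second {x y : HahnSeries ℤ S} {p q : ℤ}
    (hx : ∀ j < p, x.coeff j = 0) (hy : ∀ k < q, y.coeff k = 0) :
    (x * y).coeff (p + q + 1) =
      x.coeff p * y.coeff (q + 1) + x.coeff (p + 1) * y.coeff q := by
  rw [HahnSeries.coeff_mul]
  have hsub : Finset.antidiagonal x.isPWO_support y.isPWO_support (p + q + 1) ⊆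
      ({(p, q + 1), (p + 1, q)} : Finset (ℤ × ℤ)) := by
    intro ij hij
    simp only [Finset.mem_antidiagonal, HahnSeries.mem_support] at hij
    have h1 : ¬ ij.1 < p := fun h => hij.1 (hx _ h)
    have h2 : ¬ ij.2 < q := fun h => hij.2.1 (hy _ h)
    simp only [Finset.mem_insert, Finset.mem_singleton, Prod.ext_iff]
    omega
  rw [Finset.sum_subset hsub, Finset.sum_pair (by
    simp only [ne_eq, Prod.mk.injEq, not_and]
    intro h
    omega)]
  intro ij hij hnot
  simp only [Finset.mem_insert, Finset.mem_singleton] at hij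
  rcases hij with rfl | rfl
  · by_cases hxp : x.coeff p = 0
    · simp [hxp]
    · by_cases hyq : y.coeff (q + 1) = 0
      · simp [hyq]
      · exact absurd (Finset.mem_addAntidiagonal.mpr
          ⟨(HahnSeries.mem_support x p).mpr hxp, (HahnSeries.mem_support y (q + 1)).mpr hyq,
            show p + (q + 1) = p + q + 1 by ring⟩) hnot
  · by_cases hxp : x.coeff (p + 1) = 0
    · simp [hxp]
    · by_cases hyq : y.coeff q = 0
      · simp [hyq]
      · exact absurd (Finset.mem_addAntidiagonal.mpr
          ⟨(HahnSeries.mem_support x (p + 1)).mpr hxp, (HahnSeries.mem_support y q).mpr hyq,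
            show p + 1 + q = p + q + 1 by ring⟩) hnot

end AuxMul

lemma epsLaurent_coeff_nat (f : ℕ → R) (n : ℕ) :
    (epsLaurent f).coeff ((n : ℤ) + -1) = f n := by
  rw [epsLaurent, HahnSeries.coeff_single_mul_add, one_mul,
    HahnSeries.ofPowerSeries_apply_coeff, PowerSeries.coeff_mk]

lemma epsLaurent_coeff_neg (f : ℕ → R) (m : ℤ) (hm : m < -1) :
    (epsLaurent f).coeff m = 0 := by
  rw [epsLaurent, show m = (m + 1) + -1 by ring, HahnSeries.coeff_single_mul_add, one_mul]
  rw [HahnSeries.ofPowerSeries_apply, HahnSeries.embDomain_notin_range]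
  rintro ⟨n, hn⟩
  have h2 : (n : ℤ) = m + 1 := hn
  omega

theorem eps_expansion_deriv_exp (D : Derivation ℚ R R) (φg : ℕ → R)
    (Ψ : ℕ → HahnSeries ℤ R) (hΨ0 : Ψ 0 = 1)
    (hΨ : ∀ n : ℕ, Ψ (n + 1) =
      coeffwise D (Ψ n) + coeffwise D (epsLaurent φg) * Ψ n) (i : ℕ) :
    (Ψ i).coeff (-(i : ℤ)) = (D (φg 0)) ^ i ∧
    (Ψ i).coeff (-(i : ℤ) + 1) =
      i • ((D (φg 0)) ^ (i - 1) * D (φg 1)) +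
      (i * (i - 1) / 2) • ((D (φg 0)) ^ (i - 2) * (⇑D)^[2] (φg 0)) := by
  have hcw : ∀ (x : HahnSeries ℤ R) (n : ℤ), (coeffwise D x).coeff n = D (x.coeff n) :=
    fun _ _ => rfl
  set a := D (φg 0) with ha
  set b := D (φg 1) with hb
  have hit : (⇑D)^[2] (φg 0) = D a := rfl
  set L := coeffwise D (epsLaurent φg) with hLdef
  have hL0 : ∀ j < (-1 : ℤ), L.coeff j = 0 := by
    intro j hj
    rw [hLdef, hcw, epsLaurent_coeff_neg _ _ hj, map_zero]
  have hLm1 : L.coeff (-1) = a := by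
    rw [hLdef, hcw, show (-1 : ℤ) = ((0 : ℕ) : ℤ) + -1 by norm_num, epsLaurent_coeff_nat]
  have hL00 : L.coeff 0 = b := by
    rw [hLdef, hcw, show (0 : ℤ) = ((1 : ℕ) : ℤ) + -1 by norm_num, epsLaurent_coeff_nat]
  have key : ∀ i : ℕ, (∀ m : ℤ, m < -(i : ℤ) → (Ψ i).coeff m = 0) ∧
      (Ψ i).coeff (-(i : ℤ)) = a ^ i ∧
      (Ψ i).coeff (-(i : ℤ) + 1) =
        i • (a ^ (i - 1) * b) + (i * (i - 1) / 2) • (a ^ (i - 2) * D a) := by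
    intro i
    induction i with
    | zero =>
      refine ⟨fun m hm => ?_, ?_, ?_⟩
      · rw [hΨ0, HahnSeries.coeff_one, if_neg (by omega)]
      · rw [hΨ0]
        norm_num [HahnSeries.coeff_one]
      · rw [hΨ0]
        norm_num [HahnSeries.coeff_one]
    | succ i ih =>
      obtain ⟨ih0, ih1, ih2⟩ := ih
      have hvanish : ∀ m : ℤ, m < -((i : ℤ) + 1) → (Ψ (i + 1)).coeff m = 0 := by
        intro m hm
        rw [hΨ i, HahnSeries.coeff_add, hcw, ih0 m (by omega), map_zero,
          coeff_mul_eq_zero_of_lt hL0 ih0 (by omega), add_zero]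
      refine ⟨by push_cast; exact hvanish, ?_, ?_⟩
      · rw [hΨ i, show (-(↑(i + 1) : ℤ)) = (-1) + -(i : ℤ) by push_cast; ring,
          HahnSeries.coeff_add, hcw, ih0 _ (by omega), map_zero,
          coeff_mul_bottom hL0 ih0, hLm1, ih1, zero_add, ← pow_succ']
      · rw [hΨ i, show (-(↑(i + 1) : ℤ) + 1) = (-1) + -(i : ℤ) + 1 by push_cast; ring,
          HahnSeries.coeff_add, hcw, coeff_mul_second hL0 ih0, hLm1, show ((-1 : ℤ) + 1) = 0 by ring, hL00,
          show ((-1 : ℤ) + -(i : ℤ) + 1) = -(i : ℤ) by ring, ih1, ih2,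
          Derivation.leibniz_pow]
        rw [smul_eq_mul]
        match i with
        | 0 => simp
        | 1 => simp; ring
        | (k + 2) =>
          have hnat : ∀ t P Q n : ℕ, P = t + t → Q = P + 2 * n → Q / 2 = n + P / 2 := by
            intros; omega
          obtain ⟨t, ht⟩ := Nat.even_mul_succ_self (k + 1)
          have h1 : (k + 2) * (k + 1) = t + t := by rw [← ht]; ring
          have e : (k + 2 + 1) * (k + 2 + 1 - 1) / 2 = (k + 2) + (k + 2) * (k + 2 - 1) / 2 := by
            refine hnat t _ _ (k + 2) ?_ ?_
            · rw [show k + 2 - 1 = k + 1 by omega, h1]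
            · rw [show k + 2 + 1 - 1 = k + 2 by omega, show k + 2 - 1 = k + 1 by omega]; ring
          rw [e, show k + 2 + 1 - 1 = k + 2 by omega, show k + 2 + 1 - 2 = k + 1 by omega,
            show k + 2 - 1 = k + 1 by omega, show k + 2 - 2 = k by omega]
          simp only [nsmul_eq_mul]
          push_cast
          ring
  rw [hit]
  exact ⟨(key i).2.1, (key i).2.2⟩
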